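/- Let C ⊆ ℝ^n be a full-dimensional closed convex cone, A ∈ ℝ^{m×n}, and y ∈ relint(A(C)). Then the set argmin_{h ∈ C} ‖Ah − y‖ is a single point if and only if rank A = n. -/

import Mathlib

open scoped RealInnerProductSpace

lemma push_past {E : Type*} [NormedAddCommGroup E] [NormedSpace ℝ E]
    (S : Set E) {y z : E} (hy : y ∈ intrinsicInterior ℝ S) (hz : z ∈ S) :
    ∃ ε : ℝ, 0 < ε ∧ y + ε • (y - z) ∈ S := by
  obtain ⟨x, hx, hxy⟩ := hy
  have hyS : y ∈ S := intrinsicInterior_subset ⟨x, hx, hxy⟩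
  have hyA : y ∈ affineSpan ℝ S := subset_affineSpan ℝ S hyS
  have hzA : z ∈ affineSpan ℝ S := subset_affineSpan ℝ S hz
  have hmem : ∀ t : ℝ, y + t • (y - z) ∈ affineSpan ℝ S := by
    intro t
    have := AffineSubspace.smul_vsub_vadd_mem (affineSpan ℝ S) t hyA hzA hyA
    simpa [vsub_eq_sub, vadd_eq_add, add_comm] using this
  set f : ℝ → affineSpan ℝ S := fun t => ⟨y + t • (y - z), hmem t⟩ with hf
  have hfc : Continuous f := by
    apply Continuous.subtype_mk
    fun_prop
  have hf0 : f 0 = x := by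
    apply Subtype.coe_injective
    simp [hf, hxy]
  have : f ⁻¹' (interior ((↑) ⁻¹' S : Set (affineSpan ℝ S))) ∈ nhds (0 : ℝ) := by
    apply hfc.continuousAt.preimage_mem_nhds
    exact isOpen_interior.mem_nhds (hf0 ▸ hx)
  obtain ⟨δ, hδ, hball⟩ := Metric.mem_nhds_iff.mp this
  refine ⟨δ / 2, by linarith, ?_⟩
  have : f (δ / 2) ∈ interior ((↑) ⁻¹' S : Set (affineSpan ℝ S)) := by
    apply hball
    simp only [Metric.mem_ball, Real.dist_eq, sub_zero]
    rw [abs_of_pos (by linarith)]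
    linarith
  simpa [hf] using interior_subset this

/-- Proposition 3.5 (abstracted): let `C ⊆ ℝ^n` be a full-dimensional closed convex
cone, `A ∈ ℝ^{m×n}`, and `y` a point of the relative interior of `A(C)`. Then the
least-squares solution set `argmin_{h ∈ C} ‖Ah − y‖` is a single point if and only if
`rank A = n`. -/
theorem unique_solution_iff_rank
    {m n : ℕ} (A : Matrix (Fin m) (Fin n) ℝ)
    (C : Set (EuclideanSpace ℝ (Fin n)))
    (hCcl : IsClosed C) (hCconv : Convex ℝ C)
    (hCcone : ∀ (c : ℝ), 0 < c → ∀ x ∈ C, c • x ∈ C)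
    (hCfull : (interior C).Nonempty)
    (Amv : EuclideanSpace ℝ (Fin n) → EuclideanSpace ℝ (Fin m))
    (hAmv : ∀ h, (Amv h : Fin m → ℝ) = A.mulVec h)
    (y : EuclideanSpace ℝ (Fin m))
    (hy : y ∈ intrinsicInterior ℝ (Amv '' C)) :
    (∃ h₀, {h ∈ C | ∀ g ∈ C, ‖Amv h - y‖ ≤ ‖Amv g - y‖} = {h₀}) ↔ A.rank = n := by
  -- view the matrix action at the Euclidean-space level
  have hAmv' : ∀ u : EuclideanSpace ℝ (Fin n),
      Amv u = WithLp.toLp 2 (A.mulVec u) := fun u => by rw [← hAmv u]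
  -- rank = n iff mulVec is injective
  have hrk : A.rank = n ↔ Function.Injective A.mulVec := by
    have h1 := LinearMap.finrank_range_add_finrank_ker A.mulVecLin
    have h2 : Module.finrank ℝ (Fin n → ℝ) = n := by simp
    have hco : Function.Injective A.mulVec ↔ Function.Injective A.mulVecLin := by
      constructor <;> intro hI u v huv <;>
      exact hI (by simpa [Matrix.mulVecLin_apply] using huv)
    rw [hco, ← LinearMap.ker_eq_bot]
    constructor
    · intro hr
      have hk : Module.finrank ℝ (LinearMap.ker A.mulVecLin) = 0 := by
        have : A.rank = Module.finrank ℝ (LinearMap.range A.mulVecLin) := rfl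
        omega
      exact Submodule.finrank_eq_zero.mp hk
    · intro hk
      have : A.rank = Module.finrank ℝ (LinearMap.range A.mulVecLin) := rfl
      rw [hk, finrank_bot] at h1
      omega
  -- y is in the image
  have hyim : y ∈ Amv '' C := intrinsicInterior_subset hy
  obtain ⟨hs, hsC, hsEq⟩ := hyim
  -- characterization of the solution set
  have hset : {h ∈ C | ∀ g ∈ C, ‖Amv h - y‖ ≤ ‖Amv g - y‖}
      = {h ∈ C | Amv h = y} := by
    ext h
    simp only [Set.mem_setOf_eq]
    constructor
    · rintro ⟨hC, hmin⟩
      refine ⟨hC, ?_⟩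
      have h1 := hmin hs hsC
      rw [hsEq, sub_self, norm_zero] at h1
      have := norm_le_zero_iff.mp h1
      exact sub_eq_zero.mp this
    · rintro ⟨hC, heq⟩
      exact ⟨hC, fun g hg => by simp [heq]⟩
  rw [hrk]
  constructor
  · -- uniqueness → injective
    rintro ⟨h₀, hsol⟩
    by_contra hni
    -- a nonzero kernel vector
    simp only [Function.Injective, not_forall] at hni
    obtain ⟨a, b, hab, hne⟩ := hni
    set v : EuclideanSpace ℝ (Fin n) := WithLp.toLp 2 (a - b) with hv
    have hv0 : v ≠ 0 := fun h0 => sub_ne_zero.mpr hne (congrArg WithLp.ofLp h0)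
    have hAv : WithLp.toLp 2 (A.mulVec v) = 0 := by
      have : A.mulVec v = A.mulVec a - A.mulVec b := Matrix.mulVec_sub A a b
      rw [this, hab, sub_self, WithLp.toLp_zero]
    -- an interior point mapping to y
    obtain ⟨x₀, hx₀⟩ := hCfull
    obtain ⟨ε, hε, hpp⟩ := push_past (Amv '' C) hy ⟨x₀, interior_subset hx₀, rfl⟩
    obtain ⟨g', hg'C, hg'Eq⟩ := hpp
    have hone : (1 : ℝ) + ε ≠ 0 := by linarith
    set α : ℝ := ε / (1 + ε) with hα
    set β : ℝ := 1 / (1 + ε) with hβ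
    have hαpos : 0 < α := by positivity
    have hβpos : 0 < β := by positivity
    have hαβ : α + β = 1 := by rw [hα, hβ]; field_simp; ring
    set h : EuclideanSpace ℝ (Fin n) := α • x₀ + β • g' with hh
    have hhint : h ∈ interior C :=
      hCconv.combo_interior_self_mem_interior hx₀ hg'C hαpos hβpos.le hαβ
    have hhy : Amv h = y := by
      rw [hAmv']
      have e1 : WithLp.toLp 2 (A.mulVec h)
          = α • WithLp.toLp 2 (A.mulVec x₀) + β • WithLp.toLp 2 (A.mulVec g') := by
        have : A.mulVec (α • (x₀ : Fin n → ℝ) + β • (g' : Fin n → ℝ))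
            = α • A.mulVec x₀ + β • A.mulVec g' := by
          rw [Matrix.mulVec_add, Matrix.mulVec_smul, Matrix.mulVec_smul]
        exact congrArg (WithLp.toLp 2) this
      rw [e1, ← hAmv' x₀, ← hAmv' g', hg'Eq]
      match_scalars
      all_goals (try simp only [hα, hβ])
      all_goals field_simp
      all_goals (try ring)
    -- two distinct minimizers
    obtain ⟨δ, hδ, hball⟩ := Metric.isOpen_iff.mp isOpen_interior h hhint
    have hvnorm : 0 < ‖v‖ := norm_pos_iff.mpr hv0
    set s : ℝ := δ / (2 * ‖v‖) with hs'
    have hspos : 0 < s := by positivity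
    have hmem2 : h + s • v ∈ C := by
      apply interior_subset
      apply hball
      simp only [Metric.mem_ball, dist_eq_norm, add_sub_cancel_left, norm_smul,
        Real.norm_eq_abs, abs_of_pos hspos]
      rw [hs']
      rw [div_mul_eq_mul_div, mul_comm]
      rw [mul_div_assoc]
      calc ‖v‖ * (δ / (2 * ‖v‖)) = δ / 2 := by field_simp
        _ < δ := by linarith
    have hAh2 : Amv (h + s • v) = y := by
      rw [hAmv']
      have : A.mulVec ((h : Fin n → ℝ) + s • (v : Fin n → ℝ))
          = A.mulVec h + s • A.mulVec v := by
        rw [Matrix.mulVec_add, Matrix.mulVec_smul]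
      rw [show WithLp.toLp 2 (A.mulVec (WithLp.ofLp (h + s • v)))
          = WithLp.toLp 2 (A.mulVec h) + s • WithLp.toLp 2 (A.mulVec v) from congrArg (WithLp.toLp 2) this]
      rw [hAv, smul_zero, add_zero, ← hAmv', hhy]
    have m1 : h ∈ ({h₀} : Set _) := by
      rw [← hsol, hset]; exact ⟨interior_subset hhint, hhy⟩
    have m2 : h + s • v ∈ ({h₀} : Set _) := by
      rw [← hsol, hset]; exact ⟨hmem2, hAh2⟩
    rw [Set.mem_singleton_iff] at m1 m2
    have : s • v = 0 := by
      have := m2.trans m1.symm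
      simpa using this
    exact hv0 (by simpa [smul_eq_zero, hspos.ne'] using this)
  · -- injective → uniqueness
    intro hinj
    refine ⟨hs, ?_⟩
    rw [hset]
    ext h
    simp only [Set.mem_setOf_eq, Set.mem_singleton_iff]
    constructor
    · rintro ⟨hC, heq⟩
      have : A.mulVec h = A.mulVec hs := by
        rw [← hAmv h, ← hAmv hs, heq, hsEq]
      exact congrArg (WithLp.toLp 2) (hinj this)
    · rintro rfl
      exact ⟨hsC, hsEq⟩
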